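/- The linear operators φ(X_i) on T_n defined by φ(X_i)(f_{j,j}) = f_{j,j} for j ≠ i,i+1, φ(X_i)(f_{i+1,i+1}) = f_{i,i}, φ(X_i)(f_{i,i}) = α^{-1}(Y_i Y_{i+1} Y_i^{-1} − β), φ(X_i)(f_{j,k}) = φ(X_i)(f_{j,j}) φ(X_i)(f_{k,k}) c^{-1} for j ≠ k, and φ(X_i)(1) = 1, are invertible, with inverse given by φ(X_i^{-1})(f_{j,j}) = f_{j,j} for j ≠ i,i+1, φ(X_i^{-1})(f_{i,i}) = f_{i+1,i+1}, φ(X_i^{-1})(f_{i+1,i+1}) = α^{-1}(Y_{i+1}^{-1} Y_i Y_{i+1} − β), φ(X_i^{-1})(f_{j,k}) = φ(X_i^{-1})(f_{j,j}) φ(X_i^{-1})(f_{k,k}) c^{-1} for j ≠ k, and φ(X_i^{-1})(1) = 1. -/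

import Mathlib

/-- The braid operator `φ(X_i)` on the algebra `T_n` (with basis `1, f_{j,k}`), defined by
`f_{j,j} ↦ f_{j,j}` for `j ≠ i, i+1`, `f_{i+1,i+1} ↦ f_{i,i}`,
`f_{i,i} ↦ α⁻¹ (Y_i Y_{i+1} Y_i⁻¹ - β)`, `f_{j,k} ↦ φ(X_i)(f_{j,j}) φ(X_i)(f_{k,k}) c⁻¹`
for `j ≠ k`, and `1 ↦ 1`; here `Y_k = α f_{k,k} + β` and
`Y_k⁻¹ = β⁻¹ (1 - α γ⁻¹ f_{k,k})` with `γ = β + cα`. -/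
noncomputable def phiOp {R T : Type*} [CommRing R] [Ring T] [Algebra R T]
    {n : ℕ} (f : Fin n → Fin n → T) (b : Module.Basis (Option (Fin n × Fin n)) R T)
    (c α β γ : Rˣ) (i : ℕ) (hi : i + 1 < n) : T →ₗ[R] T :=
  letI ii : Fin n := ⟨i, Nat.lt_of_succ_lt hi⟩
  letI jj : Fin n := ⟨i + 1, hi⟩
  letI Y : Fin n → T := fun k => (α : R) • f k k + (β : R) • 1
  letI Yinv : Fin n → T := fun k =>
    ((β⁻¹ : Rˣ) : R) • (1 - ((α : R) * ((γ⁻¹ : Rˣ) : R)) • f k k)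
  letI d : Fin n → T := fun k =>
    if k = ii then ((α⁻¹ : Rˣ) : R) • (Y ii * Y jj * Yinv ii - (β : R) • 1)
    else if k = jj then f ii ii
    else f k k
  b.constr ℕ fun x => match x with
    | none => 1
    | some (j, k) => if j = k then d j else ((c⁻¹ : Rˣ) : R) • (d j * d k)

/-- The candidate inverse operator `φ(X_i⁻¹)`, defined by `f_{j,j} ↦ f_{j,j}` for
`j ≠ i, i+1`, `f_{i,i} ↦ f_{i+1,i+1}`, `f_{i+1,i+1} ↦ α⁻¹ (Y_{i+1}⁻¹ Y_i Y_{i+1} - β)`,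
`f_{j,k} ↦ φ(X_i⁻¹)(f_{j,j}) φ(X_i⁻¹)(f_{k,k}) c⁻¹` for `j ≠ k`, and `1 ↦ 1`. -/
noncomputable def phiOpInv {R T : Type*} [CommRing R] [Ring T] [Algebra R T]
    {n : ℕ} (f : Fin n → Fin n → T) (b : Module.Basis (Option (Fin n × Fin n)) R T)
    (c α β γ : Rˣ) (i : ℕ) (hi : i + 1 < n) : T →ₗ[R] T :=
  letI ii : Fin n := ⟨i, Nat.lt_of_succ_lt hi⟩
  letI jj : Fin n := ⟨i + 1, hi⟩
  letI Y : Fin n → T := fun k => (α : R) • f k k + (β : R) • 1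
  letI Yinv : Fin n → T := fun k =>
    ((β⁻¹ : Rˣ) : R) • (1 - ((α : R) * ((γ⁻¹ : Rˣ) : R)) • f k k)
  letI d : Fin n → T := fun k =>
    if k = ii then f jj jj
    else if k = jj then ((α⁻¹ : Rˣ) : R) • (Yinv jj * Y ii * Y jj - (β : R) • 1)
    else f k k
  b.constr ℕ fun x => match x with
    | none => 1
    | some (j, k) => if j = k then d j else ((c⁻¹ : Rˣ) : R) • (d j * d k)

section Aux

variable {R T : Type*} [CommRing R] [Ring T] [Algebra R T] {n : ℕ}

noncomputable def mkPhi (b : Module.Basis (Option (Fin n × Fin n)) R T) (c : Rˣ) (d : Fin n → T) :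
    T →ₗ[R] T :=
  b.constr ℕ fun x => match x with
    | none => 1
    | some (j, k) => if j = k then d j else ((c⁻¹ : Rˣ) : R) • (d j * d k)

theorem mkPhi_one (b : Module.Basis (Option (Fin n × Fin n)) R T)
    (hb1 : b none = 1) (c : Rˣ) (d : Fin n → T) : mkPhi b c d 1 = 1 := by
  conv_lhs => rw [← hb1]
  simp only [mkPhi, Module.Basis.constr_basis]

theorem mkPhi_f {f : Fin n → Fin n → T} (b : Module.Basis (Option (Fin n × Fin n)) R T)
    (hbf : ∀ j k, b (some (j, k)) = f j k) (c : Rˣ) (d : Fin n → T) (j k : Fin n) :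
    mkPhi b c d (f j k) = if j = k then d j else ((c⁻¹ : Rˣ) : R) • (d j * d k) := by
  conv_lhs => rw [← hbf j k]
  simp only [mkPhi, Module.Basis.constr_basis]

theorem mkPhi_mul {f : Fin n → Fin n → T} (b : Module.Basis (Option (Fin n × Fin n)) R T)
    (hb1 : b none = 1) (hbf : ∀ j k, b (some (j, k)) = f j k) (c : Rˣ)
    (hrel : ∀ i j k l, f i j * f k l = (c : R) • f i l)
    (d : Fin n → T)
    (h1 : ∀ k, d k * d k = (c : R) • d k)
    (h2 : ∀ j l m, d j * d l * d m = (c : R) • (d j * d m))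
    (x y : T) : mkPhi b c d (x * y) = mkPhi b c d x * mkPhi b c d y := by
  have h2' : ∀ j k l m, (d j * d k) * (d l * d m) = ((c : R) * c) • (d j * d m) := by
    intro j k l m
    rw [← mul_assoc, h2 j k l, smul_mul_assoc, h2 j l m, smul_smul]
  have hcc : ((c⁻¹ : Rˣ) : R) * (c : R) = 1 := c.inv_mul
  have hred : ∀ p q, (c : R) • (if p = q then d p else ((c⁻¹ : Rˣ) : R) • (d p * d q))
      = d p * d q := by
    intro p q
    split_ifs with h
    · subst h; rw [h1]
    · rw [smul_smul, mul_comm, hcc, one_smul]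
  have key : ∀ ix iy, mkPhi b c d (b ix * b iy) = mkPhi b c d (b ix) * mkPhi b c d (b iy) := by
    rintro (_ | ⟨j, k⟩) (_ | ⟨l, m⟩)
    · simp [hb1, mkPhi_one]
    · simp [hb1, mkPhi_one]
    · simp [hb1, mkPhi_one]
    · rw [hbf, hbf, hrel, map_smul, mkPhi_f b hbf, mkPhi_f b hbf, mkPhi_f b hbf]
      rcases eq_or_ne j k with hjk | hjk <;> rcases eq_or_ne l m with hlm | hlm
      · rw [if_pos hjk, if_pos hlm, hred, hjk, hlm]
      · rw [if_pos hjk, if_neg hlm, hred, mul_smul_comm, ← mul_assoc, h2, smul_smul, hcc,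
          one_smul]
      · rw [if_neg hjk, if_pos hlm, hred, smul_mul_assoc, h2, smul_smul, hcc, one_smul, hlm]
      · rw [if_neg hjk, if_neg hlm, hred, smul_mul_assoc, mul_smul_comm, h2']
        match_scalars
        linear_combination (-(((c⁻¹ : Rˣ) : R) * (c : R) + 1)) * hcc
  let L1 : T →ₗ[R] T →ₗ[R] T := (LinearMap.mul R T).compr₂ (mkPhi b c d)
  let L2 : T →ₗ[R] T →ₗ[R] T := (LinearMap.mul R T).compl₁₂ (mkPhi b c d) (mkPhi b c d)
  have hL : L1 = L2 := b.ext fun ix => b.ext fun iy => key ix iy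
  have := LinearMap.congr_fun (LinearMap.congr_fun hL x) y
  simpa [L1, L2] using this

/-- `Y_ii Y_jj Y_ii⁻¹ - β` style element, α⁻¹-scaled. -/
noncomputable def eA (f : Fin n → Fin n → T) (α β γ : Rˣ) (ii jj : Fin n) : T :=
  ((α⁻¹ : Rˣ) : R) • (((α : R) • f ii ii + (β : R) • 1) * ((α : R) • f jj jj + (β : R) • 1) *
    (((β⁻¹ : Rˣ) : R) • (1 - ((α : R) * ((γ⁻¹ : Rˣ) : R)) • f ii ii)) - (β : R) • 1)

noncomputable def eB (f : Fin n → Fin n → T) (α β γ : Rˣ) (ii jj : Fin n) : T :=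
  ((α⁻¹ : Rˣ) : R) • ((((β⁻¹ : Rˣ) : R) • (1 - ((α : R) * ((γ⁻¹ : Rˣ) : R)) • f jj jj)) *
    (((α : R) • f ii ii + (β : R) • 1)) * ((α : R) • f jj jj + (β : R) • 1) - (β : R) • 1)

noncomputable def dA (f : Fin n → Fin n → T) (α β γ : Rˣ) (ii jj : Fin n) : Fin n → T :=
  fun k => if k = ii then eA f α β γ ii jj else if k = jj then f ii ii else f k k

noncomputable def dB (f : Fin n → Fin n → T) (α β γ : Rˣ) (ii jj : Fin n) : Fin n → T :=
  fun k => if k = ii then f jj jj else if k = jj then eB f α β γ ii jj else f k k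

section Explicit

variable (f : Fin n → Fin n → T) (c α β γ : Rˣ)
  (hγ : (γ : R) = (β : R) + (c : R) * (α : R))
  (hrel : ∀ i j k l, f i j * f k l = (c : R) • f i l)
  (ii jj : Fin n)

include hγ hrel

theorem eA_eq :
    eA f α β γ ii jj
      = ((α : R) * c * ((β⁻¹ : Rˣ) : R)) • f ii jj + f jj jj
        - ((α : R) * α * c * c * ((β⁻¹ : Rˣ) : R) * ((γ⁻¹ : Rˣ) : R)) • f ii ii
        - ((α : R) * c * ((γ⁻¹ : Rˣ) : R)) • f jj ii := by
  have hα : ((α⁻¹ : Rˣ) : R) * α = 1 := α.inv_mul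
  have hβ : ((β⁻¹ : Rˣ) : R) * β = 1 := β.inv_mul
  have hγu : ((γ⁻¹ : Rˣ) : R) * γ = 1 := γ.inv_mul
  have hcu : ((c⁻¹ : Rˣ) : R) * c = 1 := c.inv_mul
  simp only [eA, mul_add, add_mul, mul_sub, sub_mul, mul_one, one_mul, smul_mul_assoc,
    mul_smul_comm, smul_smul, smul_sub, smul_add, hrel]
  match_scalars
  · linear_combination ((α:R)*((β⁻¹:Rˣ):R)*(c:R)) * hα
  · linear_combination (1) * hα + ((α:R)*((α⁻¹:Rˣ):R)) * hβ
  · linear_combination (-(α:R)*(α:R)*((β⁻¹:Rˣ):R)*(c:R)*(c:R)*((γ⁻¹:Rˣ):R)) * hα + (-(α:R)*((α⁻¹:Rˣ):R)*(β:R)*((β⁻¹:Rˣ):R)) * hγu + ((α:R)*((α⁻¹:Rˣ):R)*(β:R)*((β⁻¹:Rˣ):R)*((γ⁻¹:Rˣ):R)) * hγ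
  · linear_combination (((α⁻¹:Rˣ):R)*(β:R)) * hβ
  · linear_combination (-(α:R)*(c:R)*((γ⁻¹:Rˣ):R)) * hα + (-(α:R)*(α:R)*((α⁻¹:Rˣ):R)*(c:R)*((γ⁻¹:Rˣ):R)) * hβ

theorem eB_eq :
    eB f α β γ ii jj
      = ((α : R) * c * ((β⁻¹ : Rˣ) : R)) • f ii jj + f ii ii
        - ((α : R) * α * c * c * ((β⁻¹ : Rˣ) : R) * ((γ⁻¹ : Rˣ) : R)) • f jj jj
        - ((α : R) * c * ((γ⁻¹ : Rˣ) : R)) • f jj ii := by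
  have hα : ((α⁻¹ : Rˣ) : R) * α = 1 := α.inv_mul
  have hβ : ((β⁻¹ : Rˣ) : R) * β = 1 := β.inv_mul
  have hγu : ((γ⁻¹ : Rˣ) : R) * γ = 1 := γ.inv_mul
  have hcu : ((c⁻¹ : Rˣ) : R) * c = 1 := c.inv_mul
  simp only [eB, mul_add, add_mul, mul_sub, sub_mul, mul_one, one_mul, smul_mul_assoc,
    mul_smul_comm, smul_smul, smul_sub, smul_add, hrel]
  match_scalars
  · linear_combination ((α:R)*((β⁻¹:Rˣ):R)*(c:R)) * hα
  · linear_combination (-(α:R)*(α:R)*((β⁻¹:Rˣ):R)*(c:R)*(c:R)*((γ⁻¹:Rˣ):R)) * hα + (-(α:R)*((α⁻¹:Rˣ):R)*(β:R)*((β⁻¹:Rˣ):R)) * hγu + ((α:R)*((α⁻¹:Rˣ):R)*(β:R)*((β⁻¹:Rˣ):R)*((γ⁻¹:Rˣ):R)) * hγ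
  · linear_combination (1) * hα + ((α:R)*((α⁻¹:Rˣ):R)) * hβ
  · linear_combination (-(α:R)*(c:R)*((γ⁻¹:Rˣ):R)) * hα + (-(α:R)*(α:R)*((α⁻¹:Rˣ):R)*(c:R)*((γ⁻¹:Rˣ):R)) * hβ
  · linear_combination (((α⁻¹:Rˣ):R)*(β:R)) * hβ


theorem dA_form : ∀ k, dA f α β γ ii jj k = eA f α β γ ii jj ∨ ∃ p, dA f α β γ ii jj k = f p p := by
  intro k
  unfold dA
  split_ifs
  · exact Or.inl rfl
  · exact Or.inr ⟨ii, rfl⟩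
  · exact Or.inr ⟨k, rfl⟩

theorem dB_form : ∀ k, dB f α β γ ii jj k = eB f α β γ ii jj ∨ ∃ p, dB f α β γ ii jj k = f p p := by
  intro k
  unfold dB
  split_ifs
  · exact Or.inr ⟨jj, rfl⟩
  · exact Or.inl rfl
  · exact Or.inr ⟨k, rfl⟩

theorem good_eA : ∀ p q r s, f p q * eA f α β γ ii jj * f r s = ((c : R) * c) • f p s := by
  intro p q r s
  rw [eA_eq f c α β γ hγ hrel ii jj]
  have hα : ((α⁻¹ : Rˣ) : R) * α = 1 := α.inv_mul
  have hβ : ((β⁻¹ : Rˣ) : R) * β = 1 := β.inv_mul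
  have hγu : ((γ⁻¹ : Rˣ) : R) * γ = 1 := γ.inv_mul
  simp only [mul_add, add_mul, mul_sub, sub_mul, smul_mul_assoc, mul_smul_comm, smul_smul,
    smul_sub, smul_add, hrel]
  match_scalars
  · linear_combination ((α:R)*(c:R)*(c:R)*(c:R)*((γ⁻¹:Rˣ):R)) * hβ + (-(α:R)*((β⁻¹:Rˣ):R)*(c:R)*(c:R)*(c:R)) * hγu + ((α:R)*((β⁻¹:Rˣ):R)*(c:R)*(c:R)*(c:R)*((γ⁻¹:Rˣ):R)) * hγ

theorem good_eB : ∀ p q r s, f p q * eB f α β γ ii jj * f r s = ((c : R) * c) • f p s := by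
  intro p q r s
  rw [eB_eq f c α β γ hγ hrel ii jj]
  have hα : ((α⁻¹ : Rˣ) : R) * α = 1 := α.inv_mul
  have hβ : ((β⁻¹ : Rˣ) : R) * β = 1 := β.inv_mul
  have hγu : ((γ⁻¹ : Rˣ) : R) * γ = 1 := γ.inv_mul
  simp only [mul_add, add_mul, mul_sub, sub_mul, smul_mul_assoc, mul_smul_comm, smul_smul,
    smul_sub, smul_add, hrel]
  match_scalars
  · linear_combination ((α:R)*(c:R)*(c:R)*(c:R)*((γ⁻¹:Rˣ):R)) * hβ + (-(α:R)*((β⁻¹:Rˣ):R)*(c:R)*(c:R)*(c:R)) * hγu + ((α:R)*((β⁻¹:Rˣ):R)*(c:R)*(c:R)*(c:R)*((γ⁻¹:Rˣ):R)) * hγ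

theorem good_dA : ∀ l p q r s,
    f p q * dA f α β γ ii jj l * f r s = ((c : R) * c) • f p s := by
  intro l p q r s
  rcases dA_form f c α β γ hγ hrel ii jj l with hl | ⟨pp, hl⟩
  · rw [hl, good_eA f c α β γ hγ hrel ii jj]
  · rw [hl, hrel, smul_mul_assoc, hrel, smul_smul]

theorem good_dB : ∀ l p q r s,
    f p q * dB f α β γ ii jj l * f r s = ((c : R) * c) • f p s := by
  intro l p q r s
  rcases dB_form f c α β γ hγ hrel ii jj l with hl | ⟨pp, hl⟩
  · rw [hl, good_eB f c α β γ hγ hrel ii jj]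
  · rw [hl, hrel, smul_mul_assoc, hrel, smul_smul]

theorem idem_eA : eA f α β γ ii jj * eA f α β γ ii jj = (c : R) • eA f α β γ ii jj := by
  rw [eA_eq f c α β γ hγ hrel ii jj]
  have hα : ((α⁻¹ : Rˣ) : R) * α = 1 := α.inv_mul
  have hβ : ((β⁻¹ : Rˣ) : R) * β = 1 := β.inv_mul
  have hγu : ((γ⁻¹ : Rˣ) : R) * γ = 1 := γ.inv_mul
  simp only [mul_add, add_mul, mul_sub, sub_mul, smul_mul_assoc, mul_smul_comm, smul_smul,
    smul_sub, smul_add, hrel]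
  match_scalars
  · linear_combination ((α:R)*(α:R)*((β⁻¹:Rˣ):R)*(c:R)*(c:R)*(c:R)*((γ⁻¹:Rˣ):R)) * hβ + (-(α:R)*(α:R)*((β⁻¹:Rˣ):R)*((β⁻¹:Rˣ):R)*(c:R)*(c:R)*(c:R)) * hγu + ((α:R)*(α:R)*((β⁻¹:Rˣ):R)*((β⁻¹:Rˣ):R)*(c:R)*(c:R)*(c:R)*((γ⁻¹:Rˣ):R)) * hγ
  · linear_combination ((α:R)*(c:R)*(c:R)*((γ⁻¹:Rˣ):R)) * hβ + (-(α:R)*((β⁻¹:Rˣ):R)*(c:R)*(c:R)) * hγu + ((α:R)*((β⁻¹:Rˣ):R)*(c:R)*(c:R)*((γ⁻¹:Rˣ):R)) * hγ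
  · linear_combination (-(α:R)*(α:R)*(α:R)*((β⁻¹:Rˣ):R)*(c:R)*(c:R)*(c:R)*(c:R)*((γ⁻¹:Rˣ):R)*((γ⁻¹:Rˣ):R)) * hβ + ((α:R)*(α:R)*(α:R)*((β⁻¹:Rˣ):R)*((β⁻¹:Rˣ):R)*(c:R)*(c:R)*(c:R)*(c:R)*((γ⁻¹:Rˣ):R)) * hγu + (-(α:R)*(α:R)*(α:R)*((β⁻¹:Rˣ):R)*((β⁻¹:Rˣ):R)*(c:R)*(c:R)*(c:R)*(c:R)*((γ⁻¹:Rˣ):R)*((γ⁻¹:Rˣ):R)) * hγ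
  · linear_combination (-(α:R)*(α:R)*(c:R)*(c:R)*(c:R)*((γ⁻¹:Rˣ):R)*((γ⁻¹:Rˣ):R)) * hβ + ((α:R)*(α:R)*((β⁻¹:Rˣ):R)*(c:R)*(c:R)*(c:R)*((γ⁻¹:Rˣ):R)) * hγu + (-(α:R)*(α:R)*((β⁻¹:Rˣ):R)*(c:R)*(c:R)*(c:R)*((γ⁻¹:Rˣ):R)*((γ⁻¹:Rˣ):R)) * hγ

theorem idem_eB : eB f α β γ ii jj * eB f α β γ ii jj = (c : R) • eB f α β γ ii jj := by
  rw [eB_eq f c α β γ hγ hrel ii jj]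
  have hα : ((α⁻¹ : Rˣ) : R) * α = 1 := α.inv_mul
  have hβ : ((β⁻¹ : Rˣ) : R) * β = 1 := β.inv_mul
  have hγu : ((γ⁻¹ : Rˣ) : R) * γ = 1 := γ.inv_mul
  simp only [mul_add, add_mul, mul_sub, sub_mul, smul_mul_assoc, mul_smul_comm, smul_smul,
    smul_sub, smul_add, hrel]
  match_scalars
  · linear_combination ((α:R)*(α:R)*((β⁻¹:Rˣ):R)*(c:R)*(c:R)*(c:R)*((γ⁻¹:Rˣ):R)) * hβ + (-(α:R)*(α:R)*((β⁻¹:Rˣ):R)*((β⁻¹:Rˣ):R)*(c:R)*(c:R)*(c:R)) * hγu + ((α:R)*(α:R)*((β⁻¹:Rˣ):R)*((β⁻¹:Rˣ):R)*(c:R)*(c:R)*(c:R)*((γ⁻¹:Rˣ):R)) * hγ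
  · linear_combination (-(α:R)*(α:R)*(α:R)*((β⁻¹:Rˣ):R)*(c:R)*(c:R)*(c:R)*(c:R)*((γ⁻¹:Rˣ):R)*((γ⁻¹:Rˣ):R)) * hβ + ((α:R)*(α:R)*(α:R)*((β⁻¹:Rˣ):R)*((β⁻¹:Rˣ):R)*(c:R)*(c:R)*(c:R)*(c:R)*((γ⁻¹:Rˣ):R)) * hγu + (-(α:R)*(α:R)*(α:R)*((β⁻¹:Rˣ):R)*((β⁻¹:Rˣ):R)*(c:R)*(c:R)*(c:R)*(c:R)*((γ⁻¹:Rˣ):R)*((γ⁻¹:Rˣ):R)) * hγ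
  · linear_combination ((α:R)*(c:R)*(c:R)*((γ⁻¹:Rˣ):R)) * hβ + (-(α:R)*((β⁻¹:Rˣ):R)*(c:R)*(c:R)) * hγu + ((α:R)*((β⁻¹:Rˣ):R)*(c:R)*(c:R)*((γ⁻¹:Rˣ):R)) * hγ
  · linear_combination (-(α:R)*(α:R)*(c:R)*(c:R)*(c:R)*((γ⁻¹:Rˣ):R)*((γ⁻¹:Rˣ):R)) * hβ + ((α:R)*(α:R)*((β⁻¹:Rˣ):R)*(c:R)*(c:R)*(c:R)*((γ⁻¹:Rˣ):R)) * hγu + (-(α:R)*(α:R)*((β⁻¹:Rˣ):R)*(c:R)*(c:R)*(c:R)*((γ⁻¹:Rˣ):R)*((γ⁻¹:Rˣ):R)) * hγ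

theorem idem_dA : ∀ k, dA f α β γ ii jj k * dA f α β γ ii jj k = (c : R) • dA f α β γ ii jj k := by
  intro k
  rcases dA_form f c α β γ hγ hrel ii jj k with hk | ⟨p, hk⟩
  · rw [hk, idem_eA f c α β γ hγ hrel ii jj]
  · rw [hk, hrel]

theorem idem_dB : ∀ k, dB f α β γ ii jj k * dB f α β γ ii jj k = (c : R) • dB f α β γ ii jj k := by
  intro k
  rcases dB_form f c α β γ hγ hrel ii jj k with hk | ⟨p, hk⟩
  · rw [hk, idem_eB f c α β γ hγ hrel ii jj]
  · rw [hk, hrel]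

theorem coll_dA : ∀ j l m, dA f α β γ ii jj j * dA f α β γ ii jj l * dA f α β γ ii jj m
    = (c : R) • (dA f α β γ ii jj j * dA f α β γ ii jj m) := by
  intro j l m
  have hg := good_dA f c α β γ hγ hrel ii jj l
  rcases dA_form f c α β γ hγ hrel ii jj j with hj | ⟨p, hj⟩ <;>
    rcases dA_form f c α β γ hγ hrel ii jj m with hm | ⟨q, hm⟩ <;>
    rw [hj, hm] <;>
    try rw [eA_eq f c α β γ hγ hrel ii jj] <;>
    skip
  all_goals
    simp only [eA_eq f c α β γ hγ hrel ii jj, mul_add, add_mul, mul_sub, sub_mul,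
      smul_mul_assoc, mul_smul_comm, smul_smul, smul_sub, smul_add, hg, hrel]
  all_goals module

theorem coll_dB : ∀ j l m, dB f α β γ ii jj j * dB f α β γ ii jj l * dB f α β γ ii jj m
    = (c : R) • (dB f α β γ ii jj j * dB f α β γ ii jj m) := by
  intro j l m
  have hg := good_dB f c α β γ hγ hrel ii jj l
  rcases dB_form f c α β γ hγ hrel ii jj j with hj | ⟨p, hj⟩ <;>
    rcases dB_form f c α β γ hγ hrel ii jj m with hm | ⟨q, hm⟩ <;>
    rw [hj, hm]
  all_goals
    simp only [eB_eq f c α β γ hγ hrel ii jj, mul_add, add_mul, mul_sub, sub_mul,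
      smul_mul_assoc, mul_smul_comm, smul_smul, smul_sub, smul_add, hg, hrel]
  all_goals module

section WithBasis

variable (b : Module.Basis (Option (Fin n × Fin n)) R T)
  (hb1 : b none = 1) (hbf : ∀ j k, b (some (j, k)) = f j k) (hij : ii ≠ jj)

include hb1 hbf hij

theorem diag_BA : ∀ k, mkPhi b c (dA f α β γ ii jj) (dB f α β γ ii jj k) = f k k := by
  have hα : ((α⁻¹ : Rˣ) : R) * α = 1 := α.inv_mul
  have hβ : ((β⁻¹ : Rˣ) : R) * β = 1 := β.inv_mul
  have hγu : ((γ⁻¹ : Rˣ) : R) * γ = 1 := γ.inv_mul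
  have hcu : ((c⁻¹ : Rˣ) : R) * c = 1 := c.inv_mul
  have hdii : dA f α β γ ii jj ii = eA f α β γ ii jj := by simp [dA]
  have hdjj : dA f α β γ ii jj jj = f ii ii := by simp [dA, Ne.symm hij]
  intro k
  unfold dB
  split_ifs with h1 h2
  · rw [h1, mkPhi_f b hbf, if_pos rfl, hdjj]
  · rw [h2]
    rw [eB_eq f c α β γ hγ hrel ii jj]
    rw [map_sub, map_sub, map_add, map_smul, map_smul, map_smul]
    rw [mkPhi_f b hbf, mkPhi_f b hbf, mkPhi_f b hbf, mkPhi_f b hbf]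
    rw [if_neg hij, if_pos rfl, if_pos rfl, if_neg (Ne.symm hij)]
    rw [hdii, hdjj, eA_eq f c α β γ hγ hrel ii jj]
    simp only [mul_add, add_mul, mul_sub, sub_mul, smul_mul_assoc, mul_smul_comm, smul_smul,
      smul_sub, smul_add, hrel]
    match_scalars
    · linear_combination (-(α:R)*(α:R)*(c:R)*(c:R)*(c:R)*((c⁻¹:Rˣ):R)*((γ⁻¹:Rˣ):R)*((γ⁻¹:Rˣ):R) + 2*(α:R)*(α:R)*((β⁻¹:Rˣ):R)*(c:R)*(c:R)*((γ⁻¹:Rˣ):R) - (α:R)*(α:R)*(β:R)*((β⁻¹:Rˣ):R)*(c:R)*(c:R)*(c:R)*((c⁻¹:Rˣ):R)*((γ⁻¹:Rˣ):R)*((γ⁻¹:Rˣ):R) - (α:R)*(α:R)*(α:R)*((β⁻¹:Rˣ):R)*(c:R)*(c:R)*(c:R)*(c:R)*((c⁻¹:Rˣ):R)*((γ⁻¹:Rˣ):R)*((γ⁻¹:Rˣ):R)) * hβ + (2*(α:R)*(α:R)*(β:R)*((β⁻¹:Rˣ):R)*((β⁻¹:Rˣ):R)*(c:R)*(c:R)*((γ⁻¹:Rˣ):R))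 * hcu + (-(α:R)*(α:R)*((β⁻¹:Rˣ):R)*((β⁻¹:Rˣ):R)*(c:R)*(c:R)*(c:R)*((c⁻¹:Rˣ):R) - (α:R)*(α:R)*((β⁻¹:Rˣ):R)*((β⁻¹:Rˣ):R)*(c:R)*(c:R)*(c:R)*((c⁻¹:Rˣ):R)*(γ:R)*((γ⁻¹:Rˣ):R) + 2*(α:R)*(α:R)*(β:R)*((β⁻¹:Rˣ):R)*((β⁻¹:Rˣ):R)*(c:R)*(c:R)*(c:R)*((c⁻¹:Rˣ):R)*((γ⁻¹:Rˣ):R) + (α:R)*(α:R)*(α:R)*((β⁻¹:Rˣ):R)*((β⁻¹:Rˣ):R)*(c:R)*(c:R)*(c:R)*(c:R)*((c⁻¹:Rˣ):R)*((γ⁻¹:Rˣ):R)) * hγu + ((α:R)*(α:R)*((β⁻¹:Rˣ):R)*((β⁻¹:Rˣ):R)*(c:R)*(c:R)*(c:R)*((c⁻¹:Rˣ):R)*(γ:R)*((γ⁻¹:Rˣ):R)*((γ⁻¹:Rˣ):R) - (α:R)*(α:R)*(β:R)*((β⁻¹:Rˣ):R)*((β⁻¹:Rˣ):R)*(c:R)*(c:R)*(c:R)*((c⁻¹:Rˣ):R)*((γ⁻¹:Rˣ):R)*((γ⁻¹:Rˣ):R))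 * hγ
    · linear_combination ((α:R)*(c:R)*((γ⁻¹:Rˣ):R)) * hβ + ((α:R)*(β:R)*((β⁻¹:Rˣ):R)*(c:R)*((γ⁻¹:Rˣ):R)) * hcu + (-(α:R)*((β⁻¹:Rˣ):R)*(c:R)*(c:R)*((c⁻¹:Rˣ):R)) * hγu + ((α:R)*((β⁻¹:Rˣ):R)*(c:R)*(c:R)*((c⁻¹:Rˣ):R)*((γ⁻¹:Rˣ):R)) * hγ
    · linear_combination ((α:R)*(c:R)*(c:R)*((c⁻¹:Rˣ):R)*((γ⁻¹:Rˣ):R)) * hβ + (-(α:R)*((β⁻¹:Rˣ):R)*(c:R)) * hcu + (-(α:R)*((β⁻¹:Rˣ):R)*(c:R)*(c:R)*((c⁻¹:Rˣ):R)) * hγu + ((α:R)*((β⁻¹:Rˣ):R)*(c:R)*(c:R)*((c⁻¹:Rˣ):R)*((γ⁻¹:Rˣ):R)) * hγ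
    · ring
  · rw [mkPhi_f b hbf, if_pos rfl]
    simp [dA, h1, h2]

theorem diag_AB : ∀ k, mkPhi b c (dB f α β γ ii jj) (dA f α β γ ii jj k) = f k k := by
  have hα : ((α⁻¹ : Rˣ) : R) * α = 1 := α.inv_mul
  have hβ : ((β⁻¹ : Rˣ) : R) * β = 1 := β.inv_mul
  have hγu : ((γ⁻¹ : Rˣ) : R) * γ = 1 := γ.inv_mul
  have hcu : ((c⁻¹ : Rˣ) : R) * c = 1 := c.inv_mul
  have hdii : dB f α β γ ii jj ii = f jj jj := by simp [dB]
  have hdjj : dB f α β γ ii jj jj = eB f α β γ ii jj := by simp [dB, Ne.symm hij]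
  intro k
  unfold dA
  split_ifs with h1 h2
  · rw [h1]
    rw [eA_eq f c α β γ hγ hrel ii jj]
    rw [map_sub, map_sub, map_add, map_smul, map_smul, map_smul]
    rw [mkPhi_f b hbf, mkPhi_f b hbf, mkPhi_f b hbf, mkPhi_f b hbf]
    rw [if_neg hij, if_pos rfl, if_pos rfl, if_neg (Ne.symm hij)]
    rw [hdii, hdjj, eB_eq f c α β γ hγ hrel ii jj]
    simp only [mul_add, add_mul, mul_sub, sub_mul, smul_mul_assoc, mul_smul_comm, smul_smul,
      smul_sub, smul_add, hrel]
    match_scalars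
    · linear_combination (-(α:R)*(α:R)*(c:R)*(c:R)*(c:R)*((c⁻¹:Rˣ):R)*((γ⁻¹:Rˣ):R)*((γ⁻¹:Rˣ):R) + 2*(α:R)*(α:R)*((β⁻¹:Rˣ):R)*(c:R)*(c:R)*((γ⁻¹:Rˣ):R) - (α:R)*(α:R)*(β:R)*((β⁻¹:Rˣ):R)*(c:R)*(c:R)*(c:R)*((c⁻¹:Rˣ):R)*((γ⁻¹:Rˣ):R)*((γ⁻¹:Rˣ):R) - (α:R)*(α:R)*(α:R)*((β⁻¹:Rˣ):R)*(c:R)*(c:R)*(c:R)*(c:R)*((c⁻¹:Rˣ):R)*((γ⁻¹:Rˣ):R)*((γ⁻¹:Rˣ):R)) * hβ + (2*(α:R)*(α:R)*(β:R)*((β⁻¹:Rˣ):R)*((β⁻¹:Rˣ):R)*(c:R)*(c:R)*((γ⁻¹:Rˣ):R)) * hcu + (-(α:R)*(α:R)*((β⁻¹:Rˣ):R)*((β⁻¹:Rˣ):R)*(c:R)*(c:R)*(c:R)*((c⁻¹:Rˣ):R) - (α:R)*(α:R)*((β⁻¹:Rˣ):R)*((β⁻¹:Rˣ):R)*(c:R)*(c:R)*(c:R)*((c⁻¹:Rˣ):R)*(γ:R)*((γ⁻¹:Rˣ):R)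 + 2*(α:R)*(α:R)*(β:R)*((β⁻¹:Rˣ):R)*((β⁻¹:Rˣ):R)*(c:R)*(c:R)*(c:R)*((c⁻¹:Rˣ):R)*((γ⁻¹:Rˣ):R) + (α:R)*(α:R)*(α:R)*((β⁻¹:Rˣ):R)*((β⁻¹:Rˣ):R)*(c:R)*(c:R)*(c:R)*(c:R)*((c⁻¹:Rˣ):R)*((γ⁻¹:Rˣ):R)) * hγu + ((α:R)*(α:R)*((β⁻¹:Rˣ):R)*((β⁻¹:Rˣ):R)*(c:R)*(c:R)*(c:R)*((c⁻¹:Rˣ):R)*(γ:R)*((γ⁻¹:Rˣ):R)*((γ⁻¹:Rˣ):R) - (α:R)*(α:R)*(β:R)*((β⁻¹:Rˣ):R)*((β⁻¹:Rˣ):R)*(c:R)*(c:R)*(c:R)*((c⁻¹:Rˣ):R)*((γ⁻¹:Rˣ):R)*((γ⁻¹:Rˣ):R)) * hγ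
    · linear_combination ((α:R)*(c:R)*((γ⁻¹:Rˣ):R)) * hβ + ((α:R)*(β:R)*((β⁻¹:Rˣ):R)*(c:R)*((γ⁻¹:Rˣ):R)) * hcu + (-(α:R)*((β⁻¹:Rˣ):R)*(c:R)*(c:R)*((c⁻¹:Rˣ):R)) * hγu + ((α:R)*((β⁻¹:Rˣ):R)*(c:R)*(c:R)*((c⁻¹:Rˣ):R)*((γ⁻¹:Rˣ):R)) * hγ
    · linear_combination ((α:R)*(c:R)*(c:R)*((c⁻¹:Rˣ):R)*((γ⁻¹:Rˣ):R)) * hβ + (-(α:R)*((β⁻¹:Rˣ):R)*(c:R)) * hcu + (-(α:R)*((β⁻¹:Rˣ):R)*(c:R)*(c:R)*((c⁻¹:Rˣ):R)) * hγu + ((α:R)*((β⁻¹:Rˣ):R)*(c:R)*(c:R)*((c⁻¹:Rˣ):R)*((γ⁻¹:Rˣ):R)) * hγ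
    · ring
  · rw [h2, mkPhi_f b hbf, if_pos rfl, hdii]
  · rw [mkPhi_f b hbf, if_pos rfl]
    simp [dB, h1, h2]

theorem comp_eq_id (dX dY : Fin n → T)
    (h1X : ∀ k, dX k * dX k = (c : R) • dX k)
    (h2X : ∀ j l m, dX j * dX l * dX m = (c : R) • (dX j * dX m))
    (hdiag : ∀ k, mkPhi b c dX (dY k) = f k k) :
    (mkPhi b c dX) ∘ₗ (mkPhi b c dY) = LinearMap.id := by
  refine b.ext fun x => ?_
  rcases x with _ | ⟨j, k⟩
  · rw [LinearMap.comp_apply, LinearMap.id_apply, hb1, mkPhi_one b hb1, mkPhi_one b hb1]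
  · rw [LinearMap.comp_apply, LinearMap.id_apply, hbf, mkPhi_f b hbf]
    by_cases hjk : j = k
    · rw [if_pos hjk, hdiag, hjk]
    · rw [if_neg hjk, map_smul, mkPhi_mul b hb1 hbf c hrel dX h1X h2X, hdiag, hdiag, hrel,
        smul_smul, c.inv_mul, one_smul]

end WithBasis

end Explicit

end Aux

/-- The operators `φ(X_i)` on `T_n` are invertible, with inverses the operators
`φ(X_i⁻¹)` given by the indicated formulas. -/
theorem phiOp_invertible
    (R T : Type*) [CommRing R] [Ring T] [Algebra R T]
    (n : ℕ) (f : Fin n → Fin n → T) (b : Module.Basis (Option (Fin n × Fin n)) R T)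
    (hb1 : b none = 1) (hbf : ∀ j k, b (some (j, k)) = f j k)
    (c α β γ : Rˣ) (hγ : (γ : R) = (β : R) + (c : R) * (α : R))
    (hrel : ∀ i j k l, f i j * f k l = (c : R) • f i l)
    (i : ℕ) (hi : i + 1 < n) :
    (phiOp f b c α β γ i hi) ∘ₗ (phiOpInv f b c α β γ i hi) = LinearMap.id ∧
    (phiOpInv f b c α β γ i hi) ∘ₗ (phiOp f b c α β γ i hi) = LinearMap.id := by
  have hij : (⟨i, Nat.lt_of_succ_lt hi⟩ : Fin n) ≠ ⟨i + 1, hi⟩ := by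
    simp [Fin.ext_iff]
  have hA : phiOp f b c α β γ i hi
      = mkPhi b c (dA f α β γ ⟨i, Nat.lt_of_succ_lt hi⟩ ⟨i + 1, hi⟩) := rfl
  have hB : phiOpInv f b c α β γ i hi
      = mkPhi b c (dB f α β γ ⟨i, Nat.lt_of_succ_lt hi⟩ ⟨i + 1, hi⟩) := rfl
  rw [hA, hB]
  constructor
  · exact comp_eq_id f c α β γ hγ hrel _ _ b hb1 hbf hij _ _
      (idem_dA f c α β γ hγ hrel _ _) (coll_dA f c α β γ hγ hrel _ _)
      (diag_BA f c α β γ hγ hrel _ _ b hb1 hbf hij)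
  · exact comp_eq_id f c α β γ hγ hrel _ _ b hb1 hbf hij _ _
      (idem_dB f c α β γ hγ hrel _ _) (coll_dB f c α β γ hγ hrel _ _)
      (diag_AB f c α β γ hγ hrel _ _ b hb1 hbf hij)
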